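/- For any finite simple graph G on a linearly ordered vertex set (V, ≺), there exists a graph G' on V that is locally equivalent to G and is in standard form. -/

import Mathlib

open Classical Real Matrix

noncomputable section

variable {V : Type} [Fintype V] [DecidableEq V]

/-- The number of edges of `G` with both endpoints in `A`. -/
def edgeCount (G : SimpleGraph V) (A : Finset V) : ℕ :=
  (Finset.univ.filter (fun p : V × V => G.Adj p.1 p.2 ∧ p.1 ∈ A ∧ p.2 ∈ A)).card / 2

/-- The graph state `|G⟩`, as a vector in `ℂ^(V → {0,1})`. -/
def graphState (G : SimpleGraph V) : (V → Bool) → ℂ :=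
  fun x => (-1 : ℂ) ^ edgeCount G (Finset.univ.filter (fun v => x v = true)) /
    (Real.sqrt (2 ^ Fintype.card V) : ℂ)

/-- The odd neighbourhood `Odd_G(D)` of a set `D` of vertices. -/
def oddNbhd (G : SimpleGraph V) (D : Finset V) : Finset V :=
  Finset.univ.filter (fun v => Odd ((D.filter (fun u => G.Adj v u)).card))

/-- The operator `X_A` flipping the coordinates in `A`. -/
def Xop (A : Finset V) (ψ : (V → Bool) → ℂ) : (V → Bool) → ℂ :=
  fun x => ψ (fun v => if v ∈ A then !(x v) else x v)

/-- The operator `Z_A`. -/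
def Zop (A : Finset V) (ψ : (V → Bool) → ℂ) : (V → Bool) → ℂ :=
  fun x => (-1 : ℂ) ^ ((A.filter (fun v => x v = true)).card) * ψ x

/-- The Pauli operator `𝒫_D^G = (−1)^{|G[D]|} X_D Z_{Odd_G(D)}`. -/
def pauliP (G : SimpleGraph V) (D : Finset V) (ψ : (V → Bool) → ℂ) : (V → Bool) → ℂ :=
  fun x => (-1 : ℂ) ^ edgeCount G D * Xop D (Zop (oddNbhd G D) ψ) x

/-- Index of a Bool in `Fin 2`. -/
def boolIdx (b : Bool) : Fin 2 := if b then 1 else 0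

/-- Action of a local (tensor-product) operator `⊗_u U_u` on the state space. -/
def applyLocal (U : V → Matrix (Fin 2) (Fin 2) ℂ) (ψ : (V → Bool) → ℂ) : (V → Bool) → ℂ :=
  fun x => ∑ y : V → Bool, (∏ u, U u (boolIdx (x u)) (boolIdx (y u))) * ψ y

/-- A local unitary: each single-qubit factor is unitary. -/
def IsLocalUnitary (U : V → Matrix (Fin 2) (Fin 2) ℂ) : Prop :=
  ∀ u, U u ∈ Matrix.unitaryGroup (Fin 2) ℂ

def Xgate : Matrix (Fin 2) (Fin 2) ℂ := !![0, 1; 1, 0]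

def Zgate : Matrix (Fin 2) (Fin 2) ℂ := !![1, 0; 0, -1]

def Ygate : Matrix (Fin 2) (Fin 2) ℂ := Complex.I • (Xgate * Zgate)

def Hgate : Matrix (Fin 2) (Fin 2) ℂ := (1 / (Real.sqrt 2 : ℂ)) • !![1, 1; 1, -1]

/-- The rotation `Z(α) = diag(1, e^{iα})`. -/
def Zrot (α : ℝ) : Matrix (Fin 2) (Fin 2) ℂ := !![1, 0; 0, Complex.exp (Complex.I * (α : ℂ))]

/-- The rotation `X(α) = H Z(α) H`. -/
def Xrot (α : ℝ) : Matrix (Fin 2) (Fin 2) ℂ := Hgate * Zrot α * Hgate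

/-- A 2×2 matrix is in the Pauli group. -/
def IsPauliGate (M : Matrix (Fin 2) (Fin 2) ℂ) : Prop :=
  ∃ z ∈ ({1, -1, Complex.I, -Complex.I} : Set ℂ),
    ∃ P ∈ ({1, Xgate, Ygate, Zgate} : Set (Matrix (Fin 2) (Fin 2) ℂ)), M = z • P

/-- A 2×2 unitary is Clifford if it maps `X` and `Z` to the Pauli group under conjugation. -/
def IsCliffordGate (C : Matrix (Fin 2) (Fin 2) ℂ) : Prop :=
  C ∈ Matrix.unitaryGroup (Fin 2) ℂ ∧ IsPauliGate (C * Xgate * Cᴴ) ∧ IsPauliGate (C * Zgate * Cᴴ)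

/-- The subgroup `LC_r` of 2×2 unitaries generated by `H` and `Z(π/2^r)`. -/
inductive InLCr (r : ℕ) : Matrix (Fin 2) (Fin 2) ℂ → Prop
  | H : InLCr r Hgate
  | Z : InLCr r (Zrot (π / 2 ^ r))
  | one : InLCr r 1
  | mul {A B : Matrix (Fin 2) (Fin 2) ℂ} : InLCr r A → InLCr r B → InLCr r (A * B)
  | inv {A : Matrix (Fin 2) (Fin 2) ℂ} : InLCr r A → InLCr r A⁻¹

/-- Two states are LU-equivalent when some local unitary maps one to the other. -/
def LUequiv (ψ φ : (V → Bool) → ℂ) : Prop :=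
  ∃ U : V → Matrix (Fin 2) (Fin 2) ℂ, IsLocalUnitary U ∧ φ = applyLocal U ψ

/-- Two states are `LC_r`-equivalent when some local unitary with all factors in `LC_r`
maps one to the other. -/
def LCrEquiv (r : ℕ) (ψ φ : (V → Bool) → ℂ) : Prop :=
  ∃ U : V → Matrix (Fin 2) (Fin 2) ℂ, (∀ u, InLCr r (U u)) ∧ φ = applyLocal U ψ

/-- Local complementation of `G` at a vertex `u`: `v ∼ w` iff `(v ∼_G w) XOR (v, w ∈ N_G(u))`. -/
def localComp (G : SimpleGraph V) (u : V) : SimpleGraph V where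
  Adj v w := v ≠ w ∧ ¬ (G.Adj v w ↔ G.Adj u v ∧ G.Adj u w)
  symm := by
    constructor
    intro v w h
    obtain ⟨h1, h2⟩ := h
    refine ⟨h1.symm, fun h => h2 ?_⟩
    rw [G.adj_comm w v] at h
    tauto
  loopless := ⟨fun v h => h.1 rfl⟩

/-- Local equivalence: related by a sequence of local complementations. -/
def LocalEquiv : SimpleGraph V → SimpleGraph V → Prop :=
  Relation.ReflTransGen (fun G G' => ∃ u, G' = localComp G u)

/-- The local Clifford operator `L_u^G = X_u(π/2) ⊗_{v ∈ N_G(u)} Z_v(−π/2)`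
implementing the local complementation at `u`. -/
def Lmat (G : SimpleGraph V) (u : V) : V → Matrix (Fin 2) (Fin 2) ℂ :=
  fun v => if v = u then Xrot (π / 2) else if G.Adj u v then Zrot (-(π / 2)) else 1

/-- The local Clifford operator implementing a sequence of local complementations:
`lcSeqOp G [a₁, …, a_m] = L_{a_m}^{G^{(m−1)}} ⋯ L_{a_1}^{G^{(0)}}` (pointwise products). -/
def lcSeqOp : SimpleGraph V → List V → V → Matrix (Fin 2) (Fin 2) ℂ
  | _, [] => fun _ => 1
  | G, a :: l => fun v => lcSeqOp (localComp G a) l v * Lmat G a v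

/-- The support of a multiset of vertices. -/
def msSupp (S : V → ℕ) : Finset V := Finset.univ.filter (fun u => 0 < S u)

/-- A multiset of vertices is independent in `G` when its support is an independent set. -/
def MsIndep (G : SimpleGraph V) (S : V → ℕ) : Prop :=
  ∀ u v, 0 < S u → 0 < S v → ¬ G.Adj u v

/-- `S • A = Σ_{u ∈ A} S(u)`. -/
def msDot (S : V → ℕ) (A : Finset V) : ℕ := ∑ u ∈ A, S u

/-- The common neighbourhood `Λ_G^K = ⋂_{u ∈ K} N_G(u)`. -/
def commonNbhd (G : SimpleGraph V) (K : Finset V) : Finset V :=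
  Finset.univ.filter (fun v => ∀ u ∈ K, G.Adj u v)

/-- The Kronecker delta `δ(0) = 1`, `δ(k) = 0` for `k > 0`. -/
def kdelta (k : ℕ) : ℕ := if k = 0 then 1 else 0

/-- `S` is `r`-incident in `G`. -/
def RIncident (G : SimpleGraph V) (r : ℕ) (S : V → ℕ) : Prop :=
  ∀ k < r, ∀ K : Finset V, (∀ u ∈ K, u ∉ msSupp S) → K.card = k + 2 →
    2 ^ (r - k - kdelta k) ∣ msDot S (commonNbhd G K)

/-- The `r`-local complementation `G ⋆^r S`. -/
def rLocalComp (G : SimpleGraph V) (r : ℕ) (S : V → ℕ) : SimpleGraph V where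
  Adj u v := u ≠ v ∧
    ¬ (G.Adj u v ↔ msDot S (commonNbhd G {u, v}) ≡ 2 ^ (r - 1) [MOD 2 ^ r])
  symm := by
    constructor
    intro u v h
    obtain ⟨h1, h2⟩ := h
    refine ⟨h1.symm, fun h => h2 ?_⟩
    rw [G.adj_comm v u, Finset.pair_comm v u] at h
    exact h
  loopless := ⟨fun u h => h.1 rfl⟩

/-- `G ⋆^r S` is valid when `S` is independent and `r`-incident. -/
def ValidRLC (G : SimpleGraph V) (r : ℕ) (S : V → ℕ) : Prop :=
  MsIndep G S ∧ RIncident G r S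

/-- `r`-local equivalence: related by a sequence of valid `r`-local complementations. -/
def RLocalEquiv (r : ℕ) : SimpleGraph V → SimpleGraph V → Prop :=
  Relation.ReflTransGen (fun G G' => ∃ S : V → ℕ, ValidRLC G r S ∧ G' = rLocalComp G r S)

/-- A local set of `G`: a nonempty set of the form `D ∪ Odd_G(D)`. -/
def IsLocalSet (G : SimpleGraph V) (L : Finset V) : Prop :=
  L.Nonempty ∧ ∃ D : Finset V, L = D ∪ oddNbhd G D

/-- A minimal local set of `G`. -/
def IsMLS (G : SimpleGraph V) (L : Finset V) : Prop :=
  IsLocalSet G L ∧ ∀ L' : Finset V, IsLocalSet G L' → L' ⊆ L → L' = L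

/-- A vertex has type X in `G`. -/
def HasTypeX (G : SimpleGraph V) (u : V) : Prop :=
  (∃ L, IsMLS G L ∧ u ∈ L) ∧
  ∀ L D : Finset V, IsMLS G L → u ∈ L → L = D ∪ oddNbhd G D → u ∈ D ∧ u ∉ oddNbhd G D

/-- A vertex has type Y in `G`. -/
def HasTypeY (G : SimpleGraph V) (u : V) : Prop :=
  (∃ L, IsMLS G L ∧ u ∈ L) ∧
  ∀ L D : Finset V, IsMLS G L → u ∈ L → L = D ∪ oddNbhd G D → u ∈ D ∧ u ∈ oddNbhd G D

/-- A vertex has type Z in `G`. -/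
def HasTypeZ (G : SimpleGraph V) (u : V) : Prop :=
  (∃ L, IsMLS G L ∧ u ∈ L) ∧
  ∀ L D : Finset V, IsMLS G L → u ∈ L → L = D ∪ oddNbhd G D → u ∉ D ∧ u ∈ oddNbhd G D

/-- A vertex has type ⊥ in `G`. -/
def HasTypeBot (G : SimpleGraph V) (u : V) : Prop :=
  ¬ HasTypeX G u ∧ ¬ HasTypeY G u ∧ ¬ HasTypeZ G u

/-- A graph on a linearly ordered vertex set is in standard form. -/
def StandardForm {W : Type} [Fintype W] [LinearOrder W] (G : SimpleGraph W) : Prop :=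
  (∀ u, ¬ HasTypeY G u) ∧
  ∀ u, HasTypeX G u → ∀ v, G.Adj u v → HasTypeZ G v ∧ u < v

/-- The `k`-subsets of `[1, t]`. -/
abbrev KSubsets (t k : ℕ) := {A : Finset (Fin t) // A.card = k}

/-- The vertex set of the graphs `C_{t,k}` and `C'_{t,k}`. -/
abbrev CtkVertex (t k : ℕ) := Fin t ⊕ KSubsets t k

/-- The bipartite graph `C_{t,k}`: `u ∈ [1,t]` is adjacent to a `k`-subset `A` iff `u ∈ A`. -/
def Ctk (t k : ℕ) : SimpleGraph (CtkVertex t k) :=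
  SimpleGraph.fromRel (fun x y =>
    ∃ (u : Fin t) (A : KSubsets t k), x = Sum.inl u ∧ y = Sum.inr A ∧ u ∈ A.1)

/-- The graph `C'_{t,k}`: `C_{t,k}` together with all edges between distinct elements of `[1,t]`. -/
def Ctk' (t k : ℕ) : SimpleGraph (CtkVertex t k) :=
  SimpleGraph.fromRel (fun x y =>
    (∃ (u : Fin t) (A : KSubsets t k), x = Sum.inl u ∧ y = Sum.inr A ∧ u ∈ A.1) ∨
    (∃ u v : Fin t, x = Sum.inl u ∧ y = Sum.inl v))

end

noncomputable section AuxStd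

open Finset

variable {V : Type} [Fintype V] [DecidableEq V]

/-- Indicator of a proposition in `ZMod 2`. -/
def ind (p : Prop) : ZMod 2 := if p then 1 else 0

lemma ind_eq_one {p : Prop} : ind p = 1 ↔ p := by
  by_cases h : p <;> simp [ind, h]

lemma ind_eq_zero {p : Prop} : ind p = 0 ↔ ¬ p := by
  by_cases h : p <;> simp [ind, h]

lemma ind_true {p : Prop} (h : p) : ind p = 1 := ind_eq_one.mpr h
lemma ind_false {p : Prop} (h : ¬ p) : ind p = 0 := ind_eq_zero.mpr h

/-- The parity count `⟨N_G(v), D⟩` in `ZMod 2`. -/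
def fZ (G : SimpleGraph V) (D : Finset V) (v : V) : ZMod 2 :=
  ∑ u ∈ D, ind (G.Adj v u)

lemma odd_iff_cast {n : ℕ} : Odd n ↔ (n : ZMod 2) = 1 := by
  rw [Nat.odd_iff]
  constructor
  · intro h; rw [← ZMod.natCast_mod, h]; rfl
  · intro h
    rcases Nat.mod_two_eq_zero_or_one n with h0 | h1
    · exfalso; rw [← ZMod.natCast_mod, h0] at h; exact absurd h (by decide)
    · exact h1

lemma mem_oddNbhd {G : SimpleGraph V} {D : Finset V} {v : V} :
    v ∈ oddNbhd G D ↔ fZ G D v = 1 := by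
  unfold oddNbhd fZ
  simp only [Finset.mem_filter, Finset.mem_univ, true_and]
  rw [odd_iff_cast, Finset.card_filter, Nat.cast_sum]
  constructor <;> intro h <;> [skip; skip] <;>
  · convert h using 1
    refine Finset.sum_congr rfl fun u _ => ?_
    by_cases hh : G.Adj v u <;> simp [ind, hh]

lemma ind_mem_oddNbhd {G : SimpleGraph V} {D : Finset V} {v : V} :
    ind (v ∈ oddNbhd G D) = fZ G D v := by
  by_cases h : v ∈ oddNbhd G D
  · rw [ind_true h, (mem_oddNbhd.mp h)]
  · rw [ind_false h]
    have := mt mem_oddNbhd.mpr h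
    revert this
    generalize fZ G D v = x
    revert x; decide
set_option linter.unusedSectionVars false
set_option maxHeartbeats 1000000

lemma localComp_adj_iff {G : SimpleGraph V} {a v u : V} :
    (localComp G a).Adj v u ↔ (v ≠ u ∧ ¬ (G.Adj v u ↔ G.Adj a v ∧ G.Adj a u)) := Iff.rfl

lemma localComp_adj_base {G : SimpleGraph V} {a v : V} :
    (localComp G a).Adj a v ↔ G.Adj a v := by
  rw [localComp_adj_iff]
  simp [G.loopless.irrefl a]
  intro h; exact G.ne_of_adj h

lemma localComp_adj_base' {G : SimpleGraph V} {a v : V} :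
    (localComp G a).Adj v a ↔ G.Adj v a := by
  rw [(localComp G a).adj_comm, G.adj_comm]; exact localComp_adj_base

lemma ind_adj_localComp (G : SimpleGraph V) (a v u : V) :
    ind ((localComp G a).Adj v u)
      = ind (G.Adj v u) + ind (G.Adj a v) * ind (G.Adj a u) + ind (u = v) * ind (G.Adj a v) := by
  by_cases huv : u = v
  · subst huv
    rw [ind_false (G.loopless.irrefl u), ind_false ((localComp G a).loopless.irrefl u), ind_true rfl]
    by_cases h : G.Adj a u <;> simp [ind, h] <;> decide
  · have h1 : (localComp G a).Adj v u ↔ ¬ (G.Adj v u ↔ G.Adj a v ∧ G.Adj a u) := by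
      rw [localComp_adj_iff]
      exact ⟨fun h => h.2, fun h => ⟨Ne.symm huv, h⟩⟩
    rw [ind_false huv]
    by_cases h2 : G.Adj v u <;> by_cases h3 : G.Adj a v <;> by_cases h4 : G.Adj a u <;>
      simp [ind, h1, h2, h3, h4] <;> decide

lemma fZ_localComp (G : SimpleGraph V) (a : V) (D : Finset V) (v : V) :
    fZ (localComp G a) D v
      = fZ G D v + ind (G.Adj a v) * (fZ G D a + ind (v ∈ D)) := by
  unfold fZ
  have : ∀ u ∈ D, ind ((localComp G a).Adj v u)
      = ind (G.Adj v u) + ind (G.Adj a v) * ind (G.Adj a u) + ind (u = v) * ind (G.Adj a v) :=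
    fun u _ => ind_adj_localComp G a v u
  rw [Finset.sum_congr rfl this]
  rw [Finset.sum_add_distrib, Finset.sum_add_distrib, ← Finset.mul_sum]
  have h2 : ∑ u ∈ D, ind (u = v) * ind (G.Adj a v)
      = ind (v ∈ D) * ind (G.Adj a v) := by
    rw [← Finset.sum_filter_add_sum_filter_not D (fun u => u = v)]
    have hz : ∑ u ∈ D.filter (fun u => ¬ u = v), ind (u = v) * ind (G.Adj a v) = 0 := by
      refine Finset.sum_eq_zero fun u hu => ?_
      rw [ind_false (Finset.mem_filter.mp hu).2, zero_mul]
    rw [hz, add_zero]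
    by_cases hv : v ∈ D
    · have : D.filter (fun u => u = v) = {v} := by
        ext u; simp only [Finset.mem_filter, Finset.mem_singleton]
        exact ⟨fun h => h.2, fun h => ⟨h ▸ hv, h⟩⟩
      rw [this, Finset.sum_singleton, ind_true rfl, ind_true hv]
    · have : D.filter (fun u => u = v) = ∅ := by
        ext u; simp only [Finset.mem_filter, Finset.notMem_empty, iff_false, not_and]
        rintro hu rfl; exact hv hu
      rw [this, Finset.sum_empty, ind_false hv, zero_mul]
  rw [h2]
  have h3 : ∑ u ∈ D, ind (G.Adj a u) = fZ G D a := rfl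
  rw [h3]; ring

lemma fZ_symmDiff (G : SimpleGraph V) (D : Finset V) (a v : V) :
    fZ G (symmDiff D {a}) v = fZ G D v + ind (G.Adj v a) := by
  unfold fZ
  by_cases ha : a ∈ D
  · have : symmDiff D {a} = D.erase a := by
      ext u
      simp only [Finset.mem_symmDiff, Finset.mem_singleton, Finset.mem_erase]
      constructor
      · rintro (⟨h1, h2⟩ | ⟨rfl, h2⟩); exact ⟨h2, h1⟩; exact absurd ha h2
      · rintro ⟨h1, h2⟩; exact Or.inl ⟨h2, h1⟩
    rw [this, ← Finset.sum_erase_add D _ ha]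
    generalize ∑ u ∈ D.erase a, ind (G.Adj v u) = x
    generalize ind (G.Adj v a) = y
    have : y + y = 0 := by revert y; decide
    rw [add_assoc, this, add_zero]
  · have : symmDiff D {a} = insert a D := by
      ext u
      simp only [Finset.mem_symmDiff, Finset.mem_singleton, Finset.mem_insert]
      constructor
      · rintro (⟨h1, _⟩ | ⟨rfl, _⟩); exact Or.inr h1; exact Or.inl rfl
      · rintro (rfl | h); exact Or.inr ⟨rfl, ha⟩; exact Or.inl ⟨h, fun hh => ha (hh ▸ h)⟩
    rw [this, Finset.sum_insert ha, add_comm]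
/-- Generator transformation under local complementation. -/
def Tgen (G : SimpleGraph V) (a : V) (D : Finset V) : Finset V :=
  if a ∈ oddNbhd G D then symmDiff D {a} else D

lemma ind_mem_Tgen {G : SimpleGraph V} {a : V} {D : Finset V} (v : V) :
    ind (v ∈ Tgen G a D) = ind (v ∈ D) + fZ G D a * ind (v = a) := by
  unfold Tgen
  split_ifs with h
  · have hz : fZ G D a = 1 := mem_oddNbhd.mp h
    rw [hz, one_mul]
    by_cases hva : v = a
    · subst hva
      rw [ind_true rfl]
      by_cases hvD : v ∈ D
      · rw [ind_true hvD, ind_false (by simp [Finset.mem_symmDiff, hvD])]; decide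
      · rw [ind_false hvD, ind_true (by simp [Finset.mem_symmDiff, hvD])]; decide
    · rw [ind_false hva, add_zero]
      have : v ∈ symmDiff D {a} ↔ v ∈ D := by
        simp [Finset.mem_symmDiff, hva]
      by_cases hvD : v ∈ D
      · rw [ind_true hvD, ind_true (this.mpr hvD)]
      · rw [ind_false hvD, ind_false (fun hh => hvD (this.mp hh))]
  · have hz : fZ G D a = 0 := by
      have := mt mem_oddNbhd.mpr h
      revert this; generalize fZ G D a = x; revert x; decide
    rw [hz, zero_mul, add_zero]

lemma not_adj_self (G : SimpleGraph V) (a : V) : ind (G.Adj a a) = 0 :=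
  ind_false (G.loopless.irrefl a)

lemma fZ_Tgen (G : SimpleGraph V) (a : V) (D : Finset V) (v : V) :
    fZ (localComp G a) (Tgen G a D) v = fZ G D v + ind (G.Adj a v) * ind (v ∈ D) := by
  unfold Tgen
  split_ifs with h
  · have hz : fZ G D a = 1 := mem_oddNbhd.mp h
    rw [fZ_symmDiff, fZ_localComp, hz]
    have : ind ((localComp G a).Adj v a) = ind (G.Adj a v) := by
      by_cases hh : G.Adj v a
      · rw [ind_true (localComp_adj_base'.mpr hh), ind_true (G.adj_symm hh)]
      · rw [ind_false (fun c => hh (localComp_adj_base'.mp c)),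
          ind_false (fun c => hh (G.adj_symm c))]
    rw [this]
    generalize ind (G.Adj a v) = x
    generalize ind (v ∈ D) = y
    generalize fZ G D v = z
    ring_nf
    have hx : x * 2 = 0 := by revert x; decide
    linear_combination hx
  · have hz : fZ G D a = 0 := by
      have := mt mem_oddNbhd.mpr h
      revert this; generalize fZ G D a = x; revert x; decide
    rw [fZ_localComp, hz, zero_add]

/-- The local set is preserved. -/
lemma localSet_Tgen (G : SimpleGraph V) (a : V) (D : Finset V) :
    Tgen G a D ∪ oddNbhd (localComp G a) (Tgen G a D) = D ∪ oddNbhd G D := by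
  ext v
  simp only [Finset.mem_union]
  have hx := ind_mem_Tgen (G := G) (a := a) (D := D) v
  have hz := fZ_Tgen G a D v
  by_cases hva : v = a
  · subst hva
    rw [ind_true rfl, mul_one] at hx
    rw [not_adj_self, zero_mul, add_zero] at hz
    constructor
    · rintro (h | h)
      · by_cases hD : v ∈ D
        · exact Or.inl hD
        · refine Or.inr (mem_oddNbhd.mpr ?_)
          rw [ind_false hD, zero_add] at hx
          have := ind_eq_one.mpr h
          rw [hx] at this; exact this
      · exact Or.inr (mem_oddNbhd.mpr (by rw [← hz]; exact mem_oddNbhd.mp h))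
    · rintro (h | h)
      · by_cases hodd : v ∈ oddNbhd G D
        · exact Or.inr (mem_oddNbhd.mpr (by rw [hz]; exact mem_oddNbhd.mp hodd))
        · refine Or.inl (ind_eq_one.mp ?_)
          rw [hx, ind_true h]
          have : fZ G D v = 0 := by
            have := mt mem_oddNbhd.mpr hodd
            revert this; generalize fZ G D v = x; revert x; decide
          rw [this, add_zero]
      · exact Or.inr (mem_oddNbhd.mpr (by rw [hz]; exact mem_oddNbhd.mp h))
  · rw [ind_false hva, mul_zero, add_zero] at hx
    have hmem : v ∈ Tgen G a D ↔ v ∈ D := by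
      constructor
      · intro h; exact ind_eq_one.mp (by rw [← hx, ind_true h])
      · intro h; exact ind_eq_one.mp (by rw [hx, ind_true h])
    constructor
    · rintro (h | h)
      · exact Or.inl (hmem.mp h)
      · by_cases hD : v ∈ D
        · exact Or.inl hD
        · refine Or.inr (mem_oddNbhd.mpr ?_)
          rw [← mem_oddNbhd.mp h, hz, ind_false hD, mul_zero, add_zero]
    · rintro (h | h)
      · exact Or.inl (hmem.mpr h)
      · by_cases hD : v ∈ D
        · exact Or.inl (hmem.mpr hD)
        · refine Or.inr (mem_oddNbhd.mpr ?_)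
          rw [hz, ind_false hD, mul_zero, add_zero]
          exact mem_oddNbhd.mp h
lemma localComp_involutive (G : SimpleGraph V) (a : V) :
    localComp (localComp G a) a = G := by
  ext v w
  rw [localComp_adj_iff, localComp_adj_iff, localComp_adj_base, localComp_adj_base]
  by_cases hvw : v = w
  · subst hvw; simp [G.loopless.irrefl v]
  · by_cases h1 : G.Adj v w <;> by_cases h2 : G.Adj a v <;> by_cases h3 : G.Adj a w <;>
      simp [hvw, h1, h2, h3]

lemma fZ_self_Tgen (G : SimpleGraph V) (a : V) (D : Finset V) :
    fZ (localComp G a) (Tgen G a D) a = fZ G D a := by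
  rw [fZ_Tgen, not_adj_self, zero_mul, add_zero]

lemma Tgen_def (G : SimpleGraph V) (a : V) (D : Finset V) :
    Tgen G a D = if a ∈ oddNbhd G D then symmDiff D {a} else D := rfl

lemma Tgen_involutive (G : SimpleGraph V) (a : V) (D : Finset V) :
    Tgen (localComp G a) a (Tgen G a D) = D := by
  have hodd : a ∈ oddNbhd (localComp G a) (Tgen G a D) ↔ a ∈ oddNbhd G D := by
    rw [mem_oddNbhd, mem_oddNbhd, fZ_self_Tgen]
  rw [Tgen_def (localComp G a) a (Tgen G a D)]
  split_ifs with h <;> rw [hodd] at h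
  · rw [Tgen_def, if_pos h, symmDiff_symmDiff_cancel_right]
  · rw [Tgen_def, if_neg h]

lemma isLocalSet_localComp {G : SimpleGraph V} {a : V} {L : Finset V} :
    IsLocalSet (localComp G a) L ↔ IsLocalSet G L := by
  constructor
  · rintro ⟨hne, D, hD⟩
    refine ⟨hne, Tgen (localComp G a) a D, ?_⟩
    have h := localSet_Tgen (localComp G a) a D
    rw [localComp_involutive] at h
    rw [hD, ← h]
  · rintro ⟨hne, D, hD⟩
    exact ⟨hne, Tgen G a D, by rw [hD, ← localSet_Tgen G a D]⟩

lemma isMLS_localComp {G : SimpleGraph V} {a : V} {L : Finset V} :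
    IsMLS (localComp G a) L ↔ IsMLS G L := by
  unfold IsMLS
  constructor
  · rintro ⟨h1, h2⟩
    exact ⟨isLocalSet_localComp.mp h1,
      fun L' hL' hsub => h2 L' (isLocalSet_localComp.mpr hL') hsub⟩
  · rintro ⟨h1, h2⟩
    exact ⟨isLocalSet_localComp.mpr h1,
      fun L' hL' hsub => h2 L' (isLocalSet_localComp.mp hL') hsub⟩
lemma mem_iff_ind {s : Finset V} {v : V} : v ∈ s ↔ ind (v ∈ s) = 1 := ind_eq_one.symm

lemma not_mem_iff_ind {s : Finset V} {v : V} : v ∉ s ↔ ind (v ∈ s) = 0 := ind_eq_zero.symm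

lemma not_mem_oddNbhd_iff {G : SimpleGraph V} {D : Finset V} {v : V} :
    v ∉ oddNbhd G D ↔ fZ G D v = 0 := by
  rw [mem_oddNbhd]
  generalize fZ G D v = x
  revert x; decide

lemma transfer_setup {G : SimpleGraph V} {a : V} {L D : Finset V}
    (hgen : L = D ∪ oddNbhd (localComp G a) D) :
    L = Tgen (localComp G a) a D ∪ oddNbhd G (Tgen (localComp G a) a D) := by
  have h := localSet_Tgen (localComp G a) a D
  rw [localComp_involutive] at h
  rw [hgen, ← h]

lemma letters_rel (G : SimpleGraph V) (a : V) (D : Finset V) (v : V) :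
    ind (v ∈ Tgen (localComp G a) a D)
        = ind (v ∈ D) + fZ (localComp G a) D a * ind (v = a)
    ∧ fZ G (Tgen (localComp G a) a D) v
        = fZ (localComp G a) D v + ind (G.Adj a v) * ind (v ∈ D) := by
  constructor
  · exact ind_mem_Tgen v
  · have h := fZ_Tgen (localComp G a) a D v
    rw [localComp_involutive] at h
    rw [h]
    have hadj : ind ((localComp G a).Adj a v) = ind (G.Adj a v) := by
      by_cases hh : G.Adj a v
      · rw [ind_true hh, ind_true (localComp_adj_base.mpr hh)]
      · rw [ind_false hh, ind_false (fun c => hh (localComp_adj_base.mp c))]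
    rw [hadj]

section TypeTransfer

variable {G : SimpleGraph V} {a : V}

lemma typeX_lc_self (h : HasTypeX G a) : HasTypeX (localComp G a) a := by
  obtain ⟨⟨L0, hL0, ha0⟩, hall⟩ := h
  refine ⟨⟨L0, isMLS_localComp.mpr hL0, ha0⟩, ?_⟩
  intro L D hL haL hgen
  obtain ⟨rx, rz⟩ := letters_rel G a D a
  rw [ind_true rfl, mul_one] at rx
  rw [not_adj_self, zero_mul, add_zero] at rz
  obtain ⟨hCx, hCz⟩ := hall L _ (isMLS_localComp.mp hL) haL (transfer_setup hgen)
  rw [mem_iff_ind] at hCx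
  rw [not_mem_oddNbhd_iff] at hCz
  have key : ∀ xE zE xD zD : ZMod 2, xE = xD + zD → zE = zD → xE = 1 → zE = 0 →
      xD = 1 ∧ zD = 0 := by decide
  obtain ⟨k1, k2⟩ := key _ _ _ _ rx rz hCx hCz
  exact ⟨mem_iff_ind.mpr k1, not_mem_oddNbhd_iff.mpr k2⟩

lemma typeY_lc_self (h : HasTypeY G a) : HasTypeZ (localComp G a) a := by
  obtain ⟨⟨L0, hL0, ha0⟩, hall⟩ := h
  refine ⟨⟨L0, isMLS_localComp.mpr hL0, ha0⟩, ?_⟩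
  intro L D hL haL hgen
  obtain ⟨rx, rz⟩ := letters_rel G a D a
  rw [ind_true rfl, mul_one] at rx
  rw [not_adj_self, zero_mul, add_zero] at rz
  obtain ⟨hCx, hCz⟩ := hall L _ (isMLS_localComp.mp hL) haL (transfer_setup hgen)
  rw [mem_iff_ind] at hCx
  rw [mem_oddNbhd] at hCz
  have key : ∀ xE zE xD zD : ZMod 2, xE = xD + zD → zE = zD → xE = 1 → zE = 1 →
      xD = 0 ∧ zD = 1 := by decide
  obtain ⟨k1, k2⟩ := key _ _ _ _ rx rz hCx hCz
  exact ⟨not_mem_iff_ind.mpr k1, mem_oddNbhd.mpr k2⟩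

lemma typeZ_lc_self (h : HasTypeZ G a) : HasTypeY (localComp G a) a := by
  obtain ⟨⟨L0, hL0, ha0⟩, hall⟩ := h
  refine ⟨⟨L0, isMLS_localComp.mpr hL0, ha0⟩, ?_⟩
  intro L D hL haL hgen
  obtain ⟨rx, rz⟩ := letters_rel G a D a
  rw [ind_true rfl, mul_one] at rx
  rw [not_adj_self, zero_mul, add_zero] at rz
  obtain ⟨hCx, hCz⟩ := hall L _ (isMLS_localComp.mp hL) haL (transfer_setup hgen)
  rw [not_mem_iff_ind] at hCx
  rw [mem_oddNbhd] at hCz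
  have key : ∀ xE zE xD zD : ZMod 2, xE = xD + zD → zE = zD → xE = 0 → zE = 1 →
      xD = 1 ∧ zD = 1 := by decide
  obtain ⟨k1, k2⟩ := key _ _ _ _ rx rz hCx hCz
  exact ⟨mem_iff_ind.mpr k1, mem_oddNbhd.mpr k2⟩

variable {v : V}

lemma typeX_lc_nbr (hadj : G.Adj a v) (h : HasTypeX G v) :
    HasTypeY (localComp G a) v := by
  obtain ⟨⟨L0, hL0, hv0⟩, hall⟩ := h
  refine ⟨⟨L0, isMLS_localComp.mpr hL0, hv0⟩, ?_⟩
  intro L D hL hvL hgen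
  obtain ⟨rx, rz⟩ := letters_rel G a D v
  rw [ind_false (Ne.symm (G.ne_of_adj hadj)), mul_zero, add_zero] at rx
  rw [ind_true hadj, one_mul] at rz
  obtain ⟨hCx, hCz⟩ := hall L _ (isMLS_localComp.mp hL) hvL (transfer_setup hgen)
  rw [mem_iff_ind] at hCx
  rw [not_mem_oddNbhd_iff] at hCz
  have key : ∀ xE zE xD zD : ZMod 2, xE = xD → zE = zD + xD → xE = 1 → zE = 0 →
      xD = 1 ∧ zD = 1 := by decide
  obtain ⟨k1, k2⟩ := key _ _ _ _ rx rz hCx hCz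
  exact ⟨mem_iff_ind.mpr k1, mem_oddNbhd.mpr k2⟩

lemma typeY_lc_nbr (hadj : G.Adj a v) (h : HasTypeY G v) :
    HasTypeX (localComp G a) v := by
  obtain ⟨⟨L0, hL0, hv0⟩, hall⟩ := h
  refine ⟨⟨L0, isMLS_localComp.mpr hL0, hv0⟩, ?_⟩
  intro L D hL hvL hgen
  obtain ⟨rx, rz⟩ := letters_rel G a D v
  rw [ind_false (Ne.symm (G.ne_of_adj hadj)), mul_zero, add_zero] at rx
  rw [ind_true hadj, one_mul] at rz
  obtain ⟨hCx, hCz⟩ := hall L _ (isMLS_localComp.mp hL) hvL (transfer_setup hgen)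
  rw [mem_iff_ind] at hCx
  rw [mem_oddNbhd] at hCz
  have key : ∀ xE zE xD zD : ZMod 2, xE = xD → zE = zD + xD → xE = 1 → zE = 1 →
      xD = 1 ∧ zD = 0 := by decide
  obtain ⟨k1, k2⟩ := key _ _ _ _ rx rz hCx hCz
  exact ⟨mem_iff_ind.mpr k1, not_mem_oddNbhd_iff.mpr k2⟩

lemma typeZ_lc_nbr (hadj : G.Adj a v) (h : HasTypeZ G v) :
    HasTypeZ (localComp G a) v := by
  obtain ⟨⟨L0, hL0, hv0⟩, hall⟩ := h
  refine ⟨⟨L0, isMLS_localComp.mpr hL0, hv0⟩, ?_⟩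
  intro L D hL hvL hgen
  obtain ⟨rx, rz⟩ := letters_rel G a D v
  rw [ind_false (Ne.symm (G.ne_of_adj hadj)), mul_zero, add_zero] at rx
  rw [ind_true hadj, one_mul] at rz
  obtain ⟨hCx, hCz⟩ := hall L _ (isMLS_localComp.mp hL) hvL (transfer_setup hgen)
  rw [not_mem_iff_ind] at hCx
  rw [mem_oddNbhd] at hCz
  have key : ∀ xE zE xD zD : ZMod 2, xE = xD → zE = zD + xD → xE = 0 → zE = 1 →
      xD = 0 ∧ zD = 1 := by decide
  obtain ⟨k1, k2⟩ := key _ _ _ _ rx rz hCx hCz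
  exact ⟨not_mem_iff_ind.mpr k1, mem_oddNbhd.mpr k2⟩

lemma typeX_lc_far (hne : v ≠ a) (hnadj : ¬ G.Adj a v) (h : HasTypeX G v) :
    HasTypeX (localComp G a) v := by
  obtain ⟨⟨L0, hL0, hv0⟩, hall⟩ := h
  refine ⟨⟨L0, isMLS_localComp.mpr hL0, hv0⟩, ?_⟩
  intro L D hL hvL hgen
  obtain ⟨rx, rz⟩ := letters_rel G a D v
  rw [ind_false hne, mul_zero, add_zero] at rx
  rw [ind_false hnadj, zero_mul, add_zero] at rz
  obtain ⟨hCx, hCz⟩ := hall L _ (isMLS_localComp.mp hL) hvL (transfer_setup hgen)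
  rw [mem_iff_ind] at hCx
  rw [not_mem_oddNbhd_iff] at hCz
  have key : ∀ xE zE xD zD : ZMod 2, xE = xD → zE = zD → xE = 1 → zE = 0 →
      xD = 1 ∧ zD = 0 := by decide
  obtain ⟨k1, k2⟩ := key _ _ _ _ rx rz hCx hCz
  exact ⟨mem_iff_ind.mpr k1, not_mem_oddNbhd_iff.mpr k2⟩

lemma typeY_lc_far (hne : v ≠ a) (hnadj : ¬ G.Adj a v) (h : HasTypeY G v) :
    HasTypeY (localComp G a) v := by
  obtain ⟨⟨L0, hL0, hv0⟩, hall⟩ := h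
  refine ⟨⟨L0, isMLS_localComp.mpr hL0, hv0⟩, ?_⟩
  intro L D hL hvL hgen
  obtain ⟨rx, rz⟩ := letters_rel G a D v
  rw [ind_false hne, mul_zero, add_zero] at rx
  rw [ind_false hnadj, zero_mul, add_zero] at rz
  obtain ⟨hCx, hCz⟩ := hall L _ (isMLS_localComp.mp hL) hvL (transfer_setup hgen)
  rw [mem_iff_ind] at hCx
  rw [mem_oddNbhd] at hCz
  have key : ∀ xE zE xD zD : ZMod 2, xE = xD → zE = zD → xE = 1 → zE = 1 →
      xD = 1 ∧ zD = 1 := by decide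
  obtain ⟨k1, k2⟩ := key _ _ _ _ rx rz hCx hCz
  exact ⟨mem_iff_ind.mpr k1, mem_oddNbhd.mpr k2⟩

lemma typeZ_lc_far (hne : v ≠ a) (hnadj : ¬ G.Adj a v) (h : HasTypeZ G v) :
    HasTypeZ (localComp G a) v := by
  obtain ⟨⟨L0, hL0, hv0⟩, hall⟩ := h
  refine ⟨⟨L0, isMLS_localComp.mpr hL0, hv0⟩, ?_⟩
  intro L D hL hvL hgen
  obtain ⟨rx, rz⟩ := letters_rel G a D v
  rw [ind_false hne, mul_zero, add_zero] at rx
  rw [ind_false hnadj, zero_mul, add_zero] at rz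
  obtain ⟨hCx, hCz⟩ := hall L _ (isMLS_localComp.mp hL) hvL (transfer_setup hgen)
  rw [not_mem_iff_ind] at hCx
  rw [mem_oddNbhd] at hCz
  have key : ∀ xE zE xD zD : ZMod 2, xE = xD → zE = zD → xE = 0 → zE = 1 →
      xD = 0 ∧ zD = 1 := by decide
  obtain ⟨k1, k2⟩ := key _ _ _ _ rx rz hCx hCz
  exact ⟨not_mem_iff_ind.mpr k1, mem_oddNbhd.mpr k2⟩

end TypeTransfer
/-- The pivot along an edge `uv`. -/
def pivotG (G : SimpleGraph V) (u v : V) : SimpleGraph V :=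
  localComp (localComp (localComp G u) v) u

lemma pivot_adj_aux1 {G : SimpleGraph V} {u v w : V} (huv : G.Adj u v) (hwv : w ≠ v) :
    (localComp G u).Adj v w ↔ ¬ (G.Adj v w ↔ G.Adj u w) := by
  rw [localComp_adj_iff]
  simp [Ne.symm hwv, huv]

lemma pivot_adj_aux2 {G : SimpleGraph V} {u v w : V} (huv : G.Adj u v) (hwu : w ≠ u) :
    (localComp (localComp G u) v).Adj u w
      ↔ ¬ (G.Adj u w ↔ (localComp G u).Adj v w) := by
  rw [localComp_adj_iff]
  have h1 : (localComp G u).Adj u w ↔ G.Adj u w := localComp_adj_base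
  have h2 : (localComp G u).Adj v u ↔ G.Adj v u := localComp_adj_base'
  simp [h1, h2, G.adj_symm huv, Ne.symm hwu]

lemma pivotG_adj {G : SimpleGraph V} {u v : V} (huv : G.Adj u v) :
    (pivotG G u v).Adj u v := by
  unfold pivotG
  rw [localComp_adj_base, localComp_adj_base', localComp_adj_base]
  exact huv

lemma pivotG_involutive (G : SimpleGraph V) (u v : V) :
    pivotG (pivotG G u v) u v = G := by
  unfold pivotG
  rw [localComp_involutive, localComp_involutive, localComp_involutive]

section PivotTypes

variable {G : SimpleGraph V} {u v w : V}

lemma pivot_u_X (huv : G.Adj u v) (h : HasTypeX G u) : HasTypeZ (pivotG G u v) u := by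
  have h1 := typeX_lc_self h
  have h2 := typeX_lc_nbr (localComp_adj_base'.mpr (G.adj_symm huv) :
    (localComp G u).Adj v u) h1
  exact typeY_lc_self h2

lemma pivot_u_Z (huv : G.Adj u v) (h : HasTypeZ G u) : HasTypeX (pivotG G u v) u := by
  have h1 := typeZ_lc_self h
  have h2 := typeY_lc_nbr (localComp_adj_base'.mpr (G.adj_symm huv) :
    (localComp G u).Adj v u) h1
  exact typeX_lc_self h2

lemma pivot_u_Y (huv : G.Adj u v) (h : HasTypeY G u) : HasTypeY (pivotG G u v) u := by
  have h1 := typeY_lc_self h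
  have h2 := typeZ_lc_nbr (localComp_adj_base'.mpr (G.adj_symm huv) :
    (localComp G u).Adj v u) h1
  exact typeZ_lc_self h2

lemma pivot_v_X (huv : G.Adj u v) (h : HasTypeX G v) : HasTypeZ (pivotG G u v) v := by
  have h1 := typeX_lc_nbr huv h
  have h2 := typeY_lc_self h1
  have hadj : (localComp (localComp G u) v).Adj u v := by
    rw [localComp_adj_base', localComp_adj_base]; exact huv
  exact typeZ_lc_nbr hadj h2

lemma pivot_v_Z (huv : G.Adj u v) (h : HasTypeZ G v) : HasTypeX (pivotG G u v) v := by
  have h1 := typeZ_lc_nbr huv h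
  have h2 := typeZ_lc_self h1
  have hadj : (localComp (localComp G u) v).Adj u v := by
    rw [localComp_adj_base', localComp_adj_base]; exact huv
  exact typeY_lc_nbr hadj h2

lemma pivot_v_Y (huv : G.Adj u v) (h : HasTypeY G v) : HasTypeY (pivotG G u v) v := by
  have h1 := typeY_lc_nbr huv h
  have h2 := typeX_lc_self h1
  have hadj : (localComp (localComp G u) v).Adj u v := by
    rw [localComp_adj_base', localComp_adj_base]; exact huv
  exact typeX_lc_nbr hadj h2

lemma pivot_far_X (huv : G.Adj u v) (hwu : w ≠ u) (hwv : w ≠ v) (h : HasTypeX G w) :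
    HasTypeX (pivotG G u v) w := by
  by_cases p : G.Adj u w <;> by_cases q : G.Adj v w
  · have h1 := typeX_lc_nbr p h
    have hvw : ¬ (localComp G u).Adj v w := by rw [pivot_adj_aux1 huv hwv]; simp [p, q]
    have h2 := typeY_lc_far hwv hvw h1
    have huw : (localComp (localComp G u) v).Adj u w := by
      rw [pivot_adj_aux2 huv hwu]; simp [p, hvw]
    exact typeY_lc_nbr huw h2
  · have h1 := typeX_lc_nbr p h
    have hvw : (localComp G u).Adj v w := by rw [pivot_adj_aux1 huv hwv]; simp [p, q]
    have h2 := typeY_lc_nbr hvw h1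
    have huw : ¬ (localComp (localComp G u) v).Adj u w := by
      rw [pivot_adj_aux2 huv hwu]; simp [p, hvw]
    exact typeX_lc_far hwu huw h2
  · have h1 := typeX_lc_far hwu p h
    have hvw : (localComp G u).Adj v w := by rw [pivot_adj_aux1 huv hwv]; simp [p, q]
    have h2 := typeX_lc_nbr hvw h1
    have huw : (localComp (localComp G u) v).Adj u w := by
      rw [pivot_adj_aux2 huv hwu]; simp [p, hvw]
    exact typeY_lc_nbr huw h2
  · have h1 := typeX_lc_far hwu p h
    have hvw : ¬ (localComp G u).Adj v w := by rw [pivot_adj_aux1 huv hwv]; simp [p, q]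
    have h2 := typeX_lc_far hwv hvw h1
    have huw : ¬ (localComp (localComp G u) v).Adj u w := by
      rw [pivot_adj_aux2 huv hwu]; simp [p, hvw]
    exact typeX_lc_far hwu huw h2

lemma pivot_far_Y (huv : G.Adj u v) (hwu : w ≠ u) (hwv : w ≠ v) (h : HasTypeY G w) :
    HasTypeY (pivotG G u v) w := by
  by_cases p : G.Adj u w <;> by_cases q : G.Adj v w
  · have h1 := typeY_lc_nbr p h
    have hvw : ¬ (localComp G u).Adj v w := by rw [pivot_adj_aux1 huv hwv]; simp [p, q]
    have h2 := typeX_lc_far hwv hvw h1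
    have huw : (localComp (localComp G u) v).Adj u w := by
      rw [pivot_adj_aux2 huv hwu]; simp [p, hvw]
    exact typeX_lc_nbr huw h2
  · have h1 := typeY_lc_nbr p h
    have hvw : (localComp G u).Adj v w := by rw [pivot_adj_aux1 huv hwv]; simp [p, q]
    have h2 := typeX_lc_nbr hvw h1
    have huw : ¬ (localComp (localComp G u) v).Adj u w := by
      rw [pivot_adj_aux2 huv hwu]; simp [p, hvw]
    exact typeY_lc_far hwu huw h2
  · have h1 := typeY_lc_far hwu p h
    have hvw : (localComp G u).Adj v w := by rw [pivot_adj_aux1 huv hwv]; simp [p, q]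
    have h2 := typeY_lc_nbr hvw h1
    have huw : (localComp (localComp G u) v).Adj u w := by
      rw [pivot_adj_aux2 huv hwu]; simp [p, hvw]
    exact typeX_lc_nbr huw h2
  · have h1 := typeY_lc_far hwu p h
    have hvw : ¬ (localComp G u).Adj v w := by rw [pivot_adj_aux1 huv hwv]; simp [p, q]
    have h2 := typeY_lc_far hwv hvw h1
    have huw : ¬ (localComp (localComp G u) v).Adj u w := by
      rw [pivot_adj_aux2 huv hwu]; simp [p, hvw]
    exact typeY_lc_far hwu huw h2

lemma pivot_far_Z (huv : G.Adj u v) (hwu : w ≠ u) (hwv : w ≠ v) (h : HasTypeZ G w) :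
    HasTypeZ (pivotG G u v) w := by
  by_cases p : G.Adj u w <;> by_cases q : G.Adj v w
  · have h1 := typeZ_lc_nbr p h
    have hvw : ¬ (localComp G u).Adj v w := by rw [pivot_adj_aux1 huv hwv]; simp [p, q]
    have h2 := typeZ_lc_far hwv hvw h1
    have huw : (localComp (localComp G u) v).Adj u w := by
      rw [pivot_adj_aux2 huv hwu]; simp [p, hvw]
    exact typeZ_lc_nbr huw h2
  · have h1 := typeZ_lc_nbr p h
    have hvw : (localComp G u).Adj v w := by rw [pivot_adj_aux1 huv hwv]; simp [p, q]
    have h2 := typeZ_lc_nbr hvw h1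
    have huw : ¬ (localComp (localComp G u) v).Adj u w := by
      rw [pivot_adj_aux2 huv hwu]; simp [p, hvw]
    exact typeZ_lc_far hwu huw h2
  · have h1 := typeZ_lc_far hwu p h
    have hvw : (localComp G u).Adj v w := by rw [pivot_adj_aux1 huv hwv]; simp [p, q]
    have h2 := typeZ_lc_nbr hvw h1
    have huw : (localComp (localComp G u) v).Adj u w := by
      rw [pivot_adj_aux2 huv hwu]; simp [p, hvw]
    exact typeZ_lc_nbr huw h2
  · have h1 := typeZ_lc_far hwu p h
    have hvw : ¬ (localComp G u).Adj v w := by rw [pivot_adj_aux1 huv hwv]; simp [p, q]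
    have h2 := typeZ_lc_far hwv hvw h1
    have huw : ¬ (localComp (localComp G u) v).Adj u w := by
      rw [pivot_adj_aux2 huv hwu]; simp [p, hvw]
    exact typeZ_lc_far hwu huw h2

end PivotTypes
section Exclusive

variable {G : SimpleGraph V} {u : V}

lemma typeX_not_typeY (hX : HasTypeX G u) (hY : HasTypeY G u) : False := by
  obtain ⟨⟨L, hL, huL⟩, hallX⟩ := hX
  obtain ⟨_, hallY⟩ := hY
  obtain ⟨D, hD⟩ := hL.1.2
  exact (hallX L D hL huL hD).2 (hallY L D hL huL hD).2

lemma typeX_not_typeZ (hX : HasTypeX G u) (hZ : HasTypeZ G u) : False := by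
  obtain ⟨⟨L, hL, huL⟩, hallX⟩ := hX
  obtain ⟨_, hallZ⟩ := hZ
  obtain ⟨D, hD⟩ := hL.1.2
  exact (hallZ L D hL huL hD).1 (hallX L D hL huL hD).1

lemma typeY_not_typeZ (hY : HasTypeY G u) (hZ : HasTypeZ G u) : False := by
  obtain ⟨⟨L, hL, huL⟩, hallY⟩ := hY
  obtain ⟨_, hallZ⟩ := hZ
  obtain ⟨D, hD⟩ := hL.1.2
  exact (hallZ L D hL huL hD).1 (hallY L D hL huL hD).1

end Exclusive

lemma localEquiv_lc {G H : SimpleGraph V} (h : LocalEquiv G H) (a : V) :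
    LocalEquiv G (localComp H a) :=
  Relation.ReflTransGen.tail h ⟨a, rfl⟩

lemma localEquiv_pivot {G H : SimpleGraph V} (h : LocalEquiv G H) (u v : V) :
    LocalEquiv G (pivotG H u v) :=
  Relation.ReflTransGen.tail
    (Relation.ReflTransGen.tail (Relation.ReflTransGen.tail h ⟨u, rfl⟩) ⟨v, rfl⟩) ⟨u, rfl⟩
section PivotIff

variable {H : SimpleGraph V} {u v w : V}

lemma pivot_X_u_iff (huv : H.Adj u v) :
    HasTypeX (pivotG H u v) u ↔ HasTypeZ H u := by
  constructor
  · intro h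
    have h2 := pivot_u_X (pivotG_adj huv) h
    rwa [pivotG_involutive] at h2
  · exact pivot_u_Z huv

lemma pivot_X_v_iff (huv : H.Adj u v) :
    HasTypeX (pivotG H u v) v ↔ HasTypeZ H v := by
  constructor
  · intro h
    have h2 := pivot_v_X (pivotG_adj huv) h
    rwa [pivotG_involutive] at h2
  · exact pivot_v_Z huv

lemma pivot_X_far_iff (huv : H.Adj u v) (hwu : w ≠ u) (hwv : w ≠ v) :
    HasTypeX (pivotG H u v) w ↔ HasTypeX H w := by
  constructor
  · intro h
    have h2 := pivot_far_X (pivotG_adj huv) hwu hwv h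
    rwa [pivotG_involutive] at h2
  · exact pivot_far_X huv hwu hwv

lemma pivot_Y_u_iff (huv : H.Adj u v) :
    HasTypeY (pivotG H u v) u ↔ HasTypeY H u := by
  constructor
  · intro h
    have h2 := pivot_u_Y (pivotG_adj huv) h
    rwa [pivotG_involutive] at h2
  · exact pivot_u_Y huv

lemma pivot_Y_v_iff (huv : H.Adj u v) :
    HasTypeY (pivotG H u v) v ↔ HasTypeY H v := by
  constructor
  · intro h
    have h2 := pivot_v_Y (pivotG_adj huv) h
    rwa [pivotG_involutive] at h2
  · exact pivot_v_Y huv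

lemma pivot_Y_far_iff (huv : H.Adj u v) (hwu : w ≠ u) (hwv : w ≠ v) :
    HasTypeY (pivotG H u v) w ↔ HasTypeY H w := by
  constructor
  · intro h
    have h2 := pivot_far_Y (pivotG_adj huv) hwu hwv h
    rwa [pivotG_involutive] at h2
  · exact pivot_far_Y huv hwu hwv

end PivotIff

section Final

variable {W : Type} [Fintype W] [LinearOrder W]

def Ys (H : SimpleGraph W) : Finset W := Finset.univ.filter (fun w => HasTypeY H w)

def Xs (H : SimpleGraph W) : Finset W := Finset.univ.filter (fun w => HasTypeX H w)

def rk (u : W) : ℕ := (Finset.univ.filter (fun w => w < u)).card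

def Smeas (H : SimpleGraph W) : ℕ := ∑ u ∈ Xs H, rk u

def mu (H : SimpleGraph W) : ℕ :=
  (Ys H).card * ((Fintype.card W + 1) * (Fintype.card W * Fintype.card W + 1))
    + ((Xs H).card * (Fintype.card W * Fintype.card W + 1) + Smeas H)

lemma mem_Ys {H : SimpleGraph W} {w : W} : w ∈ Ys H ↔ HasTypeY H w := by
  unfold Ys; simp

lemma mem_Xs {H : SimpleGraph W} {w : W} : w ∈ Xs H ↔ HasTypeX H w := by
  unfold Xs; simp

lemma Xs_card_le (H : SimpleGraph W) : (Xs H).card ≤ Fintype.card W := by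
  refine le_trans (Finset.card_filter_le _ _) ?_
  rw [Finset.card_univ]

lemma Ys_card_le (H : SimpleGraph W) : (Ys H).card ≤ Fintype.card W := by
  refine le_trans (Finset.card_filter_le _ _) ?_
  rw [Finset.card_univ]

lemma rk_le (u : W) : rk u ≤ Fintype.card W := by
  refine le_trans (Finset.card_filter_le _ _) ?_
  rw [Finset.card_univ]

lemma rk_lt_rk {v u : W} (h : v < u) : rk v < rk u := by
  apply Finset.card_lt_card
  constructor
  · intro w hw
    simp only [Finset.mem_filter, Finset.mem_univ, true_and] at hw ⊢
    exact lt_trans hw h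
  · intro hsub
    have : v ∈ Finset.univ.filter (fun w => w < u) := by
      simp only [Finset.mem_filter, Finset.mem_univ, true_and]; exact h
    have := hsub this
    simp only [Finset.mem_filter, Finset.mem_univ, true_and] at this
    exact lt_irrefl v this

lemma Smeas_le (H : SimpleGraph W) : Smeas H ≤ Fintype.card W * Fintype.card W := by
  calc Smeas H ≤ (Xs H).card * Fintype.card W := by
        rw [← smul_eq_mul]
        exact Finset.sum_le_card_nsmul _ _ _ (fun u _ => rk_le u)
    _ ≤ Fintype.card W * Fintype.card W := Nat.mul_le_mul_right _ (Xs_card_le H)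

lemma mu_lt_of_Y_lt {H' H : SimpleGraph W} (h1 : (Ys H').card < (Ys H).card) :
    mu H' < mu H := by
  unfold mu
  set n := Fintype.card W with hn
  set B := n * n + 1 with hB
  set A := (n + 1) * B with hA
  have step1 : (Xs H').card * B + Smeas H' < A := by
    have m1 : (Xs H').card * B ≤ n * B := Nat.mul_le_mul_right B (Xs_card_le H')
    have m2 : (Xs H').card * B + Smeas H' ≤ n * B + n * n :=
      Nat.add_le_add m1 (Smeas_le H')
    have m3 : n * B + n * n < A := by
      have hAe : A = n * B + n * n + 1 := by rw [hA, hB]; ring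
      rw [hAe]; exact Nat.lt_succ_self _
    exact lt_of_le_of_lt m2 m3
  calc (Ys H').card * A + ((Xs H').card * B + Smeas H')
      < (Ys H').card * A + A := Nat.add_lt_add_left step1 _
    _ = ((Ys H').card + 1) * A := by ring
    _ ≤ (Ys H).card * A := Nat.mul_le_mul_right A h1
    _ ≤ (Ys H).card * A + ((Xs H).card * B + Smeas H) := Nat.le_add_right _ _

lemma mu_lt_of_X_lt {H' H : SimpleGraph W} (hY : (Ys H').card ≤ (Ys H).card)
    (hX : (Xs H').card < (Xs H).card) : mu H' < mu H := by
  unfold mu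
  set n := Fintype.card W with hn
  set B := n * n + 1 with hB
  set A := (n + 1) * B with hA
  have step1 : Smeas H' < B := by
    rw [hB]; exact Nat.lt_succ_of_le (Smeas_le H')
  calc (Ys H').card * A + ((Xs H').card * B + Smeas H')
      < (Ys H').card * A + ((Xs H').card * B + B) :=
        Nat.add_lt_add_left (Nat.add_lt_add_left step1 _) _
    _ = (Ys H').card * A + ((Xs H').card + 1) * B := by ring
    _ ≤ (Ys H).card * A + (Xs H).card * B :=
        Nat.add_le_add (Nat.mul_le_mul_right A hY) (Nat.mul_le_mul_right B hX)
    _ ≤ (Ys H).card * A + ((Xs H).card * B + Smeas H) :=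
        Nat.add_le_add_left (Nat.le_add_right _ _) _

lemma mu_lt_of_S_lt {H' H : SimpleGraph W} (hY : (Ys H').card ≤ (Ys H).card)
    (hX : (Xs H').card ≤ (Xs H).card) (hS : Smeas H' < Smeas H) : mu H' < mu H := by
  unfold mu
  set n := Fintype.card W with hn
  set B := n * n + 1 with hB
  set A := (n + 1) * B with hA
  have m1 : (Ys H').card * A ≤ (Ys H).card * A := Nat.mul_le_mul_right A hY
  have m2 : (Xs H').card * B ≤ (Xs H).card * B := Nat.mul_le_mul_right B hX
  omega

end Final
section Moves

variable {W : Type} [Fintype W] [LinearOrder W]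

lemma Ys_pivot_subset {H : SimpleGraph W} {u v : W} (huv : H.Adj u v) :
    Ys (pivotG H u v) ⊆ Ys H := by
  intro w hw
  rw [mem_Ys] at hw
  by_cases hwu : w = u
  · subst hwu; exact mem_Ys.mpr ((pivot_Y_u_iff huv).mp hw)
  · by_cases hwv : w = v
    · subst hwv; exact mem_Ys.mpr ((pivot_Y_v_iff huv).mp hw)
    · exact mem_Ys.mpr ((pivot_Y_far_iff huv hwu hwv).mp hw)

lemma mu_lt_pivot_XnotZ {H : SimpleGraph W} {u v : W} (huv : H.Adj u v)
    (hXu : HasTypeX H u) (hnZ : ¬ HasTypeZ H v) : mu (pivotG H u v) < mu H := by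
  apply mu_lt_of_X_lt (Finset.card_le_card (Ys_pivot_subset huv))
  have hsub : Xs (pivotG H u v) ⊆ (Xs H).erase u := by
    intro w hw
    rw [mem_Xs] at hw
    by_cases hwu : w = u
    · subst hwu; exact absurd ((pivot_X_u_iff huv).mp hw) (fun h => typeX_not_typeZ hXu h)
    · by_cases hwv : w = v
      · subst hwv; exact absurd ((pivot_X_v_iff huv).mp hw) hnZ
      · exact Finset.mem_erase.mpr ⟨hwu, mem_Xs.mpr ((pivot_X_far_iff huv hwu hwv).mp hw)⟩
  calc (Xs (pivotG H u v)).card ≤ ((Xs H).erase u).card := Finset.card_le_card hsub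
    _ < (Xs H).card := Finset.card_erase_lt_of_mem (mem_Xs.mpr hXu)

lemma mu_lt_pivot_order {H : SimpleGraph W} {u v : W} (huv : H.Adj u v)
    (hXu : HasTypeX H u) (hZv : HasTypeZ H v) (hvu : v < u) :
    mu (pivotG H u v) < mu H := by
  have hXs : Xs (pivotG H u v) = insert v ((Xs H).erase u) := by
    ext w
    simp only [Finset.mem_insert, Finset.mem_erase, mem_Xs]
    constructor
    · intro hw
      by_cases hwu : w = u
      · subst hwu; exact absurd ((pivot_X_u_iff huv).mp hw) (fun h => typeX_not_typeZ hXu h)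
      · by_cases hwv : w = v
        · exact Or.inl hwv
        · exact Or.inr ⟨hwu, (pivot_X_far_iff huv hwu hwv).mp hw⟩
    · rintro (rfl | ⟨hwu, hXw⟩)
      · exact (pivot_X_v_iff huv).mpr hZv
      · by_cases hwv : w = v
        · subst hwv; exact absurd hXw (fun h => typeX_not_typeZ h hZv)
        · exact (pivot_X_far_iff huv hwu hwv).mpr hXw
  have hvnot : v ∉ (Xs H).erase u := by
    simp only [Finset.mem_erase, mem_Xs]
    rintro ⟨_, hXv⟩; exact typeX_not_typeZ hXv hZv
  have huin : u ∈ Xs H := mem_Xs.mpr hXu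
  apply mu_lt_of_S_lt (Finset.card_le_card (Ys_pivot_subset huv))
  · rw [hXs, Finset.card_insert_of_notMem hvnot, Finset.card_erase_of_mem huin]
    have h1 : 1 ≤ (Xs H).card := Finset.card_pos.mpr ⟨u, huin⟩
    omega
  · show (∑ w ∈ Xs (pivotG H u v), rk w) < ∑ w ∈ Xs H, rk w
    rw [hXs, Finset.sum_insert hvnot]
    have e2 : ∑ w ∈ (Xs H).erase u, rk w + rk u = ∑ w ∈ Xs H, rk w :=
      Finset.sum_erase_add _ _ huin
    have h3 := rk_lt_rk hvu
    omega

lemma mu_lt_moveY {H : SimpleGraph W} {v : W} (hv : HasTypeY H v)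
    (hnoX : ∀ w, H.Adj v w → ¬ HasTypeX H w) : mu (localComp H v) < mu H := by
  apply mu_lt_of_Y_lt
  have hsub : Ys (localComp H v) ⊆ (Ys H).erase v := by
    intro w hw
    rw [mem_Ys] at hw
    by_cases hwv : w = v
    · subst hwv
      exfalso
      have h2 := typeY_lc_self hw
      rw [localComp_involutive] at h2
      exact typeY_not_typeZ hv h2
    · by_cases hadj : H.Adj v w
      · exfalso
        have h2 := typeY_lc_nbr (localComp_adj_base.mpr hadj) hw
        rw [localComp_involutive] at h2
        exact hnoX w hadj h2
      · have h2 := typeY_lc_far hwv (fun c => hadj (localComp_adj_base.mp c)) hw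
        rw [localComp_involutive] at h2
        exact Finset.mem_erase.mpr ⟨hwv, mem_Ys.mpr h2⟩
  calc (Ys (localComp H v)).card ≤ ((Ys H).erase v).card := Finset.card_le_card hsub
    _ < (Ys H).card := Finset.card_erase_lt_of_mem (mem_Ys.mpr hv)

end Moves

end AuxStd
theorem stmt_11 {V : Type} [Fintype V] [LinearOrder V] (G : SimpleGraph V) :
    ∃ G' : SimpleGraph V, LocalEquiv G G' ∧ StandardForm G' := by
  classical
  have hne : mu G ∈ {k : ℕ | ∃ H : SimpleGraph V, LocalEquiv G H ∧ mu H = k} :=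
    ⟨G, Relation.ReflTransGen.refl, rfl⟩
  obtain ⟨H, hGH, hmin⟩ := Nat.sInf_mem (Set.nonempty_of_mem hne)
  have key : ∀ H' : SimpleGraph V, LocalEquiv G H' → ¬ (mu H' < mu H) := by
    intro H' hH' hlt
    have h1 := Nat.sInf_le
      (show mu H' ∈ {k : ℕ | ∃ H : SimpleGraph V, LocalEquiv G H ∧ mu H = k} from
        ⟨H', hH', rfl⟩)
    omega
  have noY : ∀ v, ¬ HasTypeY H v := by
    intro v hv
    by_cases hX : ∃ u, H.Adj u v ∧ HasTypeX H u
    · obtain ⟨u, hadj, hXu⟩ := hX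
      exact key (pivotG H u v) (localEquiv_pivot hGH u v)
        (mu_lt_pivot_XnotZ hadj hXu (fun h => typeY_not_typeZ hv h))
    · exact key (localComp H v) (localEquiv_lc hGH v)
        (mu_lt_moveY hv (fun w hw hXw => hX ⟨w, H.adj_symm hw, hXw⟩))
  have hXpart : ∀ u, HasTypeX H u → ∀ v, H.Adj u v → HasTypeZ H v ∧ u < v := by
    intro u hXu v hadj
    have hZ : HasTypeZ H v := by
      by_contra hnZ
      exact key (pivotG H u v) (localEquiv_pivot hGH u v)
        (mu_lt_pivot_XnotZ hadj hXu hnZ)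
    refine ⟨hZ, ?_⟩
    by_contra hlt
    have hne' : v ≠ u := fun h => (H.ne_of_adj hadj) h.symm
    have hvu : v < u := lt_of_le_of_ne (le_of_not_gt hlt) hne'
    exact key (pivotG H u v) (localEquiv_pivot hGH u v)
      (mu_lt_pivot_order hadj hXu hZ hvu)
  exact ⟨H, hGH, noY, hXpart⟩
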